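/- Let ℓ ≥ 2, q = 2^ℓ, and let r be an integer with 1 ≤ r < q/2. If (a, b) ∈ S_0(ℓ; r) ∪ S_1(ℓ; r) ∪ S_2(ℓ; r), then (a mod 2^{ℓ−1}, b mod 2^{ℓ−1}) ∈ S_0(ℓ−1; r) ∪ S_1(ℓ−1; r) ∪ S_2(ℓ−1; r). -/
import Mathlib


/-- `u ≤₂ v`: every binary digit of `u` is at most the corresponding binary digit
of `v` (the 2-shadow relation). -/
def le2 (u v : ℕ) : Prop := ∀ k, u.testBit k = true → v.testBit k = true

/-- The set `S_t(ℓ; r)` of pairs `(a, b)` with `0 ≤ a, b ≤ 2^ℓ − 1` for which there exist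
`i ≤₂ b`, `j ≤₂ (b − i)` and `1 ≤ r' ≤ r` with `2i + j + a = (t+1)·2^ℓ − r'`. -/
def Sset (ℓ r t : ℕ) : Set (ℕ × ℕ) :=
  {p | p.1 ≤ 2 ^ ℓ - 1 ∧ p.2 ≤ 2 ^ ℓ - 1 ∧
    ∃ i j r' : ℕ, le2 i p.2 ∧ le2 j (p.2 - i) ∧ 1 ≤ r' ∧ r' ≤ r ∧
      2 * i + j + p.1 = (t + 1) * 2 ^ ℓ - r'}

lemma le2_le {u v : ℕ} (h : le2 u v) : u ≤ v := by
  have h1 : u &&& v = u := by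
    apply Nat.eq_of_testBit_eq
    intro k
    rw [Nat.testBit_and]
    cases hu : u.testBit k
    · simp
    · simp [h k hu]
  calc u = u &&& v := h1.symm
    _ ≤ v := Nat.and_le_right

lemma le2_mod {u v : ℕ} (m : ℕ) (h : le2 u v) : le2 (u % 2^m) (v % 2^m) := by
  intro k hk
  rw [Nat.testBit_mod_two_pow] at hk ⊢
  simp only [Bool.and_eq_true, decide_eq_true_eq] at hk ⊢
  exact ⟨hk.1, h k hk.2⟩

lemma testBit_top {m x : ℕ} (hx : x < 2 * 2^m) : x.testBit m = decide (2^m ≤ x) := by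
  rcases Nat.lt_or_ge x (2^m) with h | h
  · simp [Nat.testBit_lt_two_pow h, Nat.not_le.mpr h]
  · have h1 : x / 2^m = 1 := by
      have h2 : x / 2^m < 2 := Nat.div_lt_of_lt_mul (by omega)
      have h3 : 1 ≤ x / 2^m := (Nat.one_le_div_iff (Nat.two_pow_pos m)).mpr h
      omega
    rw [Nat.testBit_eq_decide_div_mod_eq, h1]
    simp [h]

lemma mem_S (m r k i' j' r' a' b' : ℕ) (ha : a' < 2^m) (hb : b' < 2^m)
    (hi : le2 i' b') (hj : le2 j' (b' - i')) (h1 : 1 ≤ r') (h2 : r' ≤ r)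
    (heq : 2 * i' + j' + a' + r' = (k + 1) * 2 ^ m) :
    (a', b') ∈ Sset m r k := by
  refine ⟨by simpa using Nat.le_pred_of_lt ha, by simpa using Nat.le_pred_of_lt hb,
    i', j', r', hi, hj, h1, h2, ?_⟩
  simp only
  set N := (k + 1) * 2 ^ m with hN
  omega

/-- If `(a, b) ∈ S₀(ℓ;r) ∪ S₁(ℓ;r) ∪ S₂(ℓ;r)` then dropping the most
significant bits, `(a mod 2^{ℓ−1}, b mod 2^{ℓ−1}) ∈ S₀(ℓ−1;r) ∪ S₁(ℓ−1;r) ∪ S₂(ℓ−1;r)`. -/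
theorem stmt_11 (ℓ r : ℕ) (hℓ : 2 ≤ ℓ) (hr1 : 1 ≤ r) (hr2 : 2 * r < 2 ^ ℓ)
    (a b : ℕ) (hab : (a, b) ∈ Sset ℓ r 0 ∪ Sset ℓ r 1 ∪ Sset ℓ r 2) :
    (a % 2 ^ (ℓ - 1), b % 2 ^ (ℓ - 1)) ∈
      Sset (ℓ - 1) r 0 ∪ Sset (ℓ - 1) r 1 ∪ Sset (ℓ - 1) r 2 := by
  have hmem : ∃ t, t ≤ 2 ∧ (a, b) ∈ Sset ℓ r t := by
    rcases hab with (h | h) | h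
    exacts [⟨0, by norm_num, h⟩, ⟨1, by norm_num, h⟩, ⟨2, by norm_num, h⟩]
  obtain ⟨t, ht, hmem⟩ := hmem
  simp only [Sset, Set.mem_setOf_eq] at hmem
  obtain ⟨ha, hb, i, j, r', hi, hj, hr'1, hr'2, heq⟩ := hmem
  set m := ℓ - 1 with hm
  have hℓeq : ℓ = m + 1 := by omega
  set Q := 2 ^ m with hQ
  have hQ1 : 1 ≤ Q := Nat.one_le_two_pow
  have hpow : 2 ^ ℓ = 2 * Q := by rw [hℓeq, pow_succ, hQ]; ring
  have hb2 : b < 2 * Q := by omega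
  have ha2 : a < 2 * Q := by omega
  have hib : i ≤ b := le2_le hi
  have hji : j ≤ b - i := le2_le hj
  set N := (t + 1) * 2 ^ ℓ with hN
  have hNge : 2 ^ ℓ ≤ N := Nat.le_mul_of_pos_left _ (by omega)
  have heq' : 2 * i + j + a + r' = N := by omega
  have hdvdN : Q ∣ N := ⟨(t + 1) * 2, by rw [hN, hpow]; ring⟩
  -- decomposition facts
  have hi' := Nat.div_add_mod i Q
  have hj' := Nat.div_add_mod j Q
  have ha' := Nat.div_add_mod a Q
  have hb' := Nat.div_add_mod b Q
  have hiQ : i / Q < 2 := Nat.div_lt_of_lt_mul (by omega)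
  have hbQ : b / Q < 2 := Nat.div_lt_of_lt_mul (by omega)
  set s := 2 * (i % Q) + j % Q + a % Q + r' with hs
  have hsN : s + Q * (2 * (i / Q) + j / Q + a / Q) = N := by
    calc s + Q * (2 * (i / Q) + j / Q + a / Q)
        = 2 * (Q * (i / Q) + i % Q) + (Q * (j / Q) + j % Q)
            + (Q * (a / Q) + a % Q) + r' := by ring
      _ = 2 * i + j + a + r' := by rw [hi', hj', ha']
      _ = N := heq'
  have hdvds : Q ∣ s := by
    rw [Nat.eq_sub_of_add_eq hsN]
    exact Nat.dvd_sub hdvdN (Dvd.intro _ rfl)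
  -- mod facts
  have himod : i % Q ≤ b % Q := le2_le (le2_mod m hi)
  have hdivle : i / Q ≤ b / Q := Nat.div_le_div_right hib
  have hsub : (b - i) % Q = b % Q - i % Q := by
    have hmlt : b % Q - i % Q < Q := lt_of_le_of_lt (Nat.sub_le _ _) (Nat.mod_lt _ (by omega))
    have hi0 : i / Q = 0 ∨ i / Q = 1 := by
      rcases Nat.lt_or_ge i Q with h | h
      · exact Or.inl (Nat.div_eq_of_lt h)
      · exact Or.inr (le_antisymm (Nat.lt_succ_iff.mp hiQ)
          ((Nat.one_le_div_iff hQ1).mpr h))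
    have hb0 : b / Q = 0 ∨ b / Q = 1 := by
      rcases Nat.lt_or_ge b Q with h | h
      · exact Or.inl (Nat.div_eq_of_lt h)
      · exact Or.inr (le_antisymm (Nat.lt_succ_iff.mp hbQ)
          ((Nat.one_le_div_iff hQ1).mpr h))
    have h1 : b - i = Q * (b / Q - i / Q) + (b % Q - i % Q) := by
      rcases hi0 with h2 | h2 <;> rcases hb0 with h3 | h3 <;>
        rw [h2] at hi' ⊢ <;> rw [h3] at hb' ⊢ <;> omega
    rw [h1, Nat.mul_add_mod, Nat.mod_eq_of_lt hmlt]
  have hjmod : j % Q ≤ b % Q - i % Q := by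
    have := le2_le (le2_mod m hj)
    rwa [hsub] at this
  -- bound s
  have haQ : a % Q < Q := Nat.mod_lt _ (by omega)
  have hbm : b % Q < Q := Nat.mod_lt _ (by omega)
  have hsub2 : s < 4 * Q := by omega
  obtain ⟨k, hk⟩ := hdvds
  have hk1 : 1 ≤ k := by
    rcases Nat.eq_zero_or_pos k with h | h
    · rw [h, Nat.mul_zero] at hk; omega
    · exact h
  have hk3 : k ≤ 3 := by
    by_contra h
    push_neg at h
    have : Q * 4 ≤ Q * k := Nat.mul_le_mul_left Q (by omega)
    omega
  have hmain : ∀ k', k = k' + 1 →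
      (a % Q, b % Q) ∈ Sset m r k' := by
    intro k' hkk
    refine mem_S m r k' (i % Q) (j % Q) r' (a % Q) (b % Q) (by omega) (by omega)
      (le2_mod m hi) (by rw [← hsub]; exact le2_mod m hj) hr'1 hr'2 ?_
    have : (k' + 1) * 2 ^ m = Q * k := by rw [hkk, ← hQ]; ring
    omega
  have hcase : k = 1 ∨ k = 2 ∨ k = 3 := by omega
  rcases hcase with h | h | h
  · exact Or.inl (Or.inl (hmain 0 (by omega)))
  · exact Or.inl (Or.inr (hmain 1 (by omega)))
  · exact Or.inr (hmain 2 (by omega))
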